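/- (Fundamental Identity) For every n ≥ 1, m_n = L_n − 2·c_n; equivalently, m_n = N₃(B_n) − N₁(B_n), i.e., the pillar length equals the excess of 3's over 1's in the corresponding block. -/
import Mathlib


/-- Generation operator: expand a run-length vector `R` starting with symbol `s`,
alternating between `s` and `4 - s` from run to run. -/
def G : List ℕ → ℕ → List ℕ
  | [], _ => []
  | r :: rs, s => List.replicate r s ++ G rs (4 - s)

/-- Pillar sequences: `P 1 = [3]`, `P (n+1) = G (P n) 3` for `n ≥ 1`. -/
def P : ℕ → List ℕ
  | 0 => []
  | 1 => [3]
  | n + 2 => G (P (n + 1)) 3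

/-- Block sequences: `B 1 = G [1,3,3,3,1] 1`, `B (n+1) = B n ++ P n ++ B n` for `n ≥ 1`. -/
def B : ℕ → List ℕ
  | 0 => []
  | 1 => G [1, 3, 3, 3, 1] 1
  | n + 2 => B (n + 1) ++ P (n + 1) ++ B (n + 1)

lemma G_length (R : List ℕ) (s : ℕ) : (G R s).length = R.sum := by
  induction R generalizing s with
  | nil => simp [G]
  | cons r rs ih => simp [G, ih]

lemma mem_G (R : List ℕ) (s : ℕ) (hs : s = 1 ∨ s = 3) :
    ∀ x ∈ G R s, x = 1 ∨ x = 3 := by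
  induction R generalizing s with
  | nil => simp [G]
  | cons r rs ih =>
    intro x hx
    simp only [G, List.mem_append, List.mem_replicate] at hx
    rcases hx with ⟨-, rfl⟩ | hx
    · exact hs
    · exact ih (4 - s) (by rcases hs with rfl | rfl <;> simp) x hx

lemma count_length {l : List ℕ} (h : ∀ x ∈ l, x = 1 ∨ x = 3) :
    l.count 1 + l.count 3 = l.length := by
  induction l with
  | nil => simp
  | cons a t ih =>
    have ha := h a (by simp)
    have ht := ih (fun x hx => h x (by simp [hx]))
    rcases ha with rfl | rfl <;>
      simp [List.count_cons] <;> omega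

lemma sum_count {l : List ℕ} (h : ∀ x ∈ l, x = 1 ∨ x = 3) :
    l.sum = l.count 1 + 3 * l.count 3 := by
  induction l with
  | nil => simp
  | cons a t ih =>
    have ha := h a (by simp)
    have ht := ih (fun x hx => h x (by simp [hx]))
    rcases ha with rfl | rfl <;>
      simp [List.count_cons] <;> omega

lemma mem_P : ∀ n, ∀ x ∈ P n, x = 1 ∨ x = 3 := by
  intro n
  match n with
  | 0 => simp [P]
  | 1 => simp [P]
  | n + 2 => exact mem_G _ 3 (Or.inr rfl)

lemma mem_B : ∀ n, ∀ x ∈ B n, x = 1 ∨ x = 3 := by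
  intro n
  induction n with
  | zero => simp [B]
  | succ k ih =>
    match k, ih with
    | 0, _ => exact mem_G _ 1 (Or.inl rfl)
    | k + 1, ih =>
      intro x hx
      simp only [B, List.mem_append] at hx
      rcases hx with (hx | hx) | hx
      · exact ih x hx
      · exact mem_P _ x hx
      · exact ih x hx

lemma key : ∀ n, 1 ≤ n →
    ((P n).length : ℤ) = ((B n).count 3 : ℤ) - ((B n).count 1 : ℤ) := by
  intro n hn
  induction n, hn using Nat.le_induction with
  | base => decide
  | succ n hn ih =>
    obtain ⟨k, rfl⟩ : ∃ k, n = k + 1 := ⟨n - 1, by omega⟩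
    have h1 : P (k + 1 + 1) = G (P (k + 1)) 3 := rfl
    have h2 : B (k + 1 + 1) = B (k + 1) ++ P (k + 1) ++ B (k + 1) := rfl
    have hsum := sum_count (mem_P (k + 1))
    have hlen := count_length (mem_P (k + 1))
    rw [h1, h2, G_length, hsum]
    simp only [List.count_append, List.length_append]
    push_cast
    omega

/-- Fundamental identity: for every `n ≥ 1`, `m n = L n − 2·c n`; equivalently,
`m n = N₃(B n) − N₁(B n)`, the excess of `3`s over `1`s in the block `B n`. -/
theorem fundamental_identity :
    ∀ n : ℕ, 1 ≤ n →
      ((P n).length : ℤ) = ((B n).length : ℤ) - 2 * ((B n).count 1 : ℤ) ∧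
      ((P n).length : ℤ) = ((B n).count 3 : ℤ) - ((B n).count 1 : ℤ) := by
  intro n hn
  have hk := key n hn
  have hl := count_length (mem_B n)
  refine ⟨?_, hk⟩
  push_cast at hk ⊢
  omega
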